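/- Let 1 < α < 2 and let f_1(u,v,w) = min(uv,1)·min(vw,1)·min(uw,1) (i.e., the function f_n with n = 1 and μ = 1). Then the integral ∫_0^∞ ∫_0^∞ ∫_0^∞ f_1(u,v,w) u^{−α−1} v^{−α−1} w^{−α−1} du dv dw is finite. -/

import Mathlib

open MeasureTheory Real

section Aux

open Set
open scoped ENNReal

noncomputable def Fm (x : ℝ) : ℝ≥0∞ := ENNReal.ofReal (min x 1)
noncomputable def Rp (s x : ℝ) : ℝ≥0∞ := ENNReal.ofReal (exp (s * log x))
noncomputable def Bf (α c : ℝ) : ℝ≥0∞ := ∫⁻ z in Ioi (0:ℝ), Fm (c*z) * Fm z * Rp (-α-1) z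
noncomputable def Cf (α u : ℝ) : ℝ≥0∞ := ∫⁻ y in Ioi (0:ℝ), Fm y * Rp (-α-1) y * Bf α (y/u^2)
noncomputable def Kf (α p : ℝ) : ℝ≥0∞ := ∫⁻ u in Ioi (0:ℝ), Rp (α-1) u * Fm (p/u^2)
noncomputable def Dv (α : ℝ) : ℝ≥0∞ := ∫⁻ z in Ioi (0:ℝ), Fm z * Rp (-α-1) z * Rp (α/2) z
noncomputable def Gf (α y : ℝ) : ℝ≥0∞ := ∫⁻ u in Ioi (0:ℝ), Rp (α-1) u * Bf α (y/u^2)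

lemma Rp_pos {s x : ℝ} (hx : 0 < x) : Rp s x = ENNReal.ofReal (x ^ s) := by
  rw [Rp, Real.rpow_def_of_pos hx, mul_comm]

lemma Fm_ne_top {x : ℝ} : Fm x ≠ ⊤ := ENNReal.ofReal_ne_top
lemma Rp_ne_top {s x : ℝ} : Rp s x ≠ ⊤ := ENNReal.ofReal_ne_top

lemma mFm : Measurable Fm := (measurable_id.min measurable_const).ennreal_ofReal

lemma mRp (s : ℝ) : Measurable (Rp s) :=
  ((Real.measurable_log.const_mul s).exp).ennreal_ofReal

lemma mBf (α : ℝ) : Measurable (Bf α) := by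
  have : Measurable fun p : ℝ × ℝ => Fm (p.1 * p.2) * Fm p.2 * Rp (-α-1) p.2 :=
    ((mFm.comp (measurable_fst.mul measurable_snd)).mul (mFm.comp measurable_snd)).mul
      ((mRp _).comp measurable_snd)
  exact this.lintegral_prod_right'

lemma rpow_inv_aux {u : ℝ} (hu : 0 < u) (a : ℝ) : u⁻¹ * u⁻¹ ^ a = u ^ (-1 - a) := by
  rw [← Real.rpow_neg_one u, ← Real.rpow_mul hu.le, ← Real.rpow_add hu]
  ring_nf

lemma ofReal_prod6 {a b c d e f : ℝ} (ha : 0 ≤ a) (hb : 0 ≤ b) (hc : 0 ≤ c)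
    (hd : 0 ≤ d) (he : 0 ≤ e) :
    (ENNReal.ofReal a * ENNReal.ofReal b * ENNReal.ofReal c) *
      (ENNReal.ofReal d * ENNReal.ofReal e * ENNReal.ofReal f)
      = ENNReal.ofReal (a*b*c*(d*e*f)) := by
  rw [← ENNReal.ofReal_mul ha, ← ENNReal.ofReal_mul (mul_nonneg ha hb),
    ← ENNReal.ofReal_mul hd, ← ENNReal.ofReal_mul (mul_nonneg hd he),
    ← ENNReal.ofReal_mul (mul_nonneg (mul_nonneg ha hb) hc)]

lemma lint_scale (f : ℝ → ℝ≥0∞) {c : ℝ} (hc : 0 < c) :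
    ∫⁻ x in Ioi (0:ℝ), f (c * x) = ENNReal.ofReal c⁻¹ * ∫⁻ x in Ioi (0:ℝ), f x := by
  let e : ℝ ≃ᵐ ℝ := (Homeomorph.mulLeft₀ c hc.ne').toMeasurableEquiv
  have hpre : (fun x : ℝ => c * x) ⁻¹' (Ioi 0) = Ioi 0 := by
    ext x
    simp only [mem_preimage, mem_Ioi]
    constructor
    · intro h; nlinarith
    · intro h; positivity
  have hmap : Measure.map (⇑e) (volume.restrict (Ioi 0))
      = ENNReal.ofReal c⁻¹ • volume.restrict (Ioi 0) := by
    have : ⇑e = fun x : ℝ => c * x := rfl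
    rw [this, ← hpre, ← Measure.restrict_map (by fun_prop) measurableSet_Ioi,
      Real.map_volume_mul_left hc.ne', Measure.restrict_smul, hpre,
      abs_of_pos (inv_pos.mpr hc)]
  calc ∫⁻ x in Ioi (0:ℝ), f (c * x)
      = ∫⁻ x, f (e x) ∂(volume.restrict (Ioi 0)) := rfl
    _ = ∫⁻ y, f y ∂(Measure.map (⇑e) (volume.restrict (Ioi 0))) :=
        (MeasureTheory.lintegral_map_equiv f e).symm
    _ = ENNReal.ofReal c⁻¹ * ∫⁻ x in Ioi (0:ℝ), f x := by
        rw [hmap, lintegral_smul_measure, smul_eq_mul]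

lemma L1 (α : ℝ) {u : ℝ} (v : ℝ) (hu : 0 < u) :
    ∫⁻ w in Ioi (0:ℝ), Fm (v*w) * Fm (u*w) * Rp (-α-1) w
      = ENNReal.ofReal (u ^ α) * Bf α (v/u) := by
  set f : ℝ → ℝ≥0∞ := fun z => Fm ((v/u)*z) * Fm z * Rp (-α-1) (u⁻¹*z) with hf
  have h1 : ∀ w : ℝ, Fm (v*w) * Fm (u*w) * Rp (-α-1) w = f (u*w) := by
    intro w
    have e1 : (v/u)*(u*w) = v*w := by field_simp
    have e2 : u⁻¹*(u*w) = w := by field_simp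
    rw [hf]; simp only [e1, e2]
  calc ∫⁻ w in Ioi (0:ℝ), Fm (v*w) * Fm (u*w) * Rp (-α-1) w
      = ∫⁻ w in Ioi (0:ℝ), f (u*w) := lintegral_congr h1
    _ = ENNReal.ofReal u⁻¹ * ∫⁻ z in Ioi (0:ℝ), f z := lint_scale f hu
    _ = ENNReal.ofReal u⁻¹ * (ENNReal.ofReal (u⁻¹ ^ (-α-1)) * Bf α (v/u)) := by
        congr 1
        rw [Bf, ← lintegral_const_mul' _ _ ENNReal.ofReal_ne_top]
        refine setLIntegral_congr_fun measurableSet_Ioi (fun z hz => ?_)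
        have hz : (0:ℝ) < z := hz
        rw [hf]; simp only
        rw [Rp_pos (mul_pos (inv_pos.2 hu) hz), Rp_pos hz,
          Real.mul_rpow (inv_pos.2 hu).le hz.le,
          ENNReal.ofReal_mul (Real.rpow_nonneg (inv_pos.2 hu).le _)]
        ring
    _ = ENNReal.ofReal (u ^ α) * Bf α (v/u) := by
        rw [← mul_assoc, ← ENNReal.ofReal_mul (inv_pos.2 hu).le, rpow_inv_aux hu,
          show (-1 - (-α-1)) = α by ring]

lemma L2 (α : ℝ) {u : ℝ} (hu : 0 < u) :
    ∫⁻ v in Ioi (0:ℝ), Fm (u*v) * Rp (-α-1) v * Bf α (v/u)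
      = ENNReal.ofReal (u ^ α) * Cf α u := by
  set f : ℝ → ℝ≥0∞ := fun y => Fm y * Rp (-α-1) (u⁻¹*y) * Bf α ((u⁻¹*y)/u) with hf
  have h1 : ∀ v : ℝ, Fm (u*v) * Rp (-α-1) v * Bf α (v/u) = f (u*v) := by
    intro v
    have e2 : u⁻¹*(u*v) = v := by field_simp
    rw [hf]; simp only [e2]
  calc ∫⁻ v in Ioi (0:ℝ), Fm (u*v) * Rp (-α-1) v * Bf α (v/u)
      = ∫⁻ v in Ioi (0:ℝ), f (u*v) := lintegral_congr h1
    _ = ENNReal.ofReal u⁻¹ * ∫⁻ y in Ioi (0:ℝ), f y := lint_scale f hu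
    _ = ENNReal.ofReal u⁻¹ * (ENNReal.ofReal (u⁻¹ ^ (-α-1)) * Cf α u) := by
        congr 1
        rw [Cf, ← lintegral_const_mul' _ _ ENNReal.ofReal_ne_top]
        refine setLIntegral_congr_fun measurableSet_Ioi (fun y hy => ?_)
        have hy : (0:ℝ) < y := hy
        have e3 : (u⁻¹*y)/u = y/u^2 := by rw [inv_mul_eq_div, div_div, ← pow_two]
        rw [hf]; simp only [e3]
        rw [Rp_pos (mul_pos (inv_pos.2 hu) hy), Rp_pos hy,
          Real.mul_rpow (inv_pos.2 hu).le hy.le,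
          ENNReal.ofReal_mul (Real.rpow_nonneg (inv_pos.2 hu).le _)]
        ring
    _ = ENNReal.ofReal (u ^ α) * Cf α u := by
        rw [← mul_assoc, ← ENNReal.ofReal_mul (inv_pos.2 hu).le, rpow_inv_aux hu,
          show (-1 - (-α-1)) = α by ring]

lemma L3 (α : ℝ) {p : ℝ} (hp : 0 < p) :
    Kf α p = ENNReal.ofReal (p ^ (α/2)) * Kf α 1 := by
  set c := Real.sqrt p with hcdef
  have hc : 0 < c := Real.sqrt_pos.mpr hp
  have hc2 : c^2 = p := Real.sq_sqrt hp.le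
  set f : ℝ → ℝ≥0∞ := fun x => Rp (α-1) x * Fm (p/x^2) with hf
  have h : ∫⁻ t in Ioi (0:ℝ), f (c*t) = ENNReal.ofReal c⁻¹ * Kf α p := lint_scale f hc
  have h2 : ∫⁻ t in Ioi (0:ℝ), f (c*t) = ENNReal.ofReal (c ^ (α-1)) * Kf α 1 := by
    rw [Kf, ← lintegral_const_mul' _ _ ENNReal.ofReal_ne_top]
    refine setLIntegral_congr_fun measurableSet_Ioi (fun t ht => ?_)
    have ht : (0:ℝ) < t := ht
    have e1 : p/(c*t)^2 = 1/t^2 := by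
      rw [mul_pow, hc2]; field_simp
    rw [hf]; simp only [e1]
    rw [Rp_pos (mul_pos hc ht), Rp_pos ht, Real.mul_rpow hc.le ht.le,
      ENNReal.ofReal_mul (Real.rpow_nonneg hc.le _)]
    ring
  have h3 : ENNReal.ofReal c⁻¹ * Kf α p = ENNReal.ofReal (c^(α-1)) * Kf α 1 := by
    rw [← h, h2]
  calc Kf α p = ENNReal.ofReal c * (ENNReal.ofReal c⁻¹ * Kf α p) := by
        rw [← mul_assoc, ← ENNReal.ofReal_mul hc.le, mul_inv_cancel₀ hc.ne',
          ENNReal.ofReal_one, one_mul]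
    _ = ENNReal.ofReal c * (ENNReal.ofReal (c^(α-1)) * Kf α 1) := by rw [h3]
    _ = ENNReal.ofReal (p ^ (α/2)) * Kf α 1 := by
        rw [← mul_assoc, ← ENNReal.ofReal_mul hc.le]
        congr 2
        nth_rewrite 1 [← Real.rpow_one c]
        rw [← Real.rpow_add hc, show (1 + (α-1)) = α by ring, hcdef,
          Real.sqrt_eq_rpow, ← Real.rpow_mul hp.le]
        congr 1
        ring

lemma fin_Ioc {s : ℝ} (hs : -1 < s) : ∫⁻ x in Ioc (0:ℝ) 1, ENNReal.ofReal (x ^ s) < ⊤ := by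
  have h : IntegrableOn (fun x : ℝ => x ^ s) (Ioc (0:ℝ) 1) volume := by
    have := intervalIntegral.intervalIntegrable_rpow' (a := 0) (b := 1) (r := s) hs
    rwa [intervalIntegrable_iff_integrableOn_Ioc_of_le zero_le_one] at this
  exact h.lintegral_lt_top

lemma fin_Ioi {s : ℝ} (hs : s < -1) : ∫⁻ x in Ioi (1:ℝ), ENNReal.ofReal (x ^ s) < ⊤ :=
  (integrableOn_Ioi_rpow_of_lt hs one_pos).lintegral_lt_top

lemma fin_all {g : ℝ → ℝ} {s t : ℝ} (hs : -1 < s) (ht : t < -1)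
    (h1 : ∀ x ∈ Ioc (0:ℝ) 1, g x ≤ x ^ s) (h2 : ∀ x ∈ Ioi (1:ℝ), g x ≤ x ^ t) :
    ∫⁻ x in Ioi (0:ℝ), ENNReal.ofReal (g x) < ⊤ := by
  rw [← Ioc_union_Ioi_eq_Ioi (zero_le_one' ℝ), lintegral_union measurableSet_Ioi
    Ioc_disjoint_Ioi_same]
  have b1 : ∫⁻ x in Ioc (0:ℝ) 1, ENNReal.ofReal (g x) ≤ ∫⁻ x in Ioc (0:ℝ) 1,
      ENNReal.ofReal (x ^ s) :=
    setLIntegral_mono (by fun_prop) fun x hx => ENNReal.ofReal_le_ofReal (h1 x hx)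
  have b2 : ∫⁻ x in Ioi (1:ℝ), ENNReal.ofReal (g x) ≤ ∫⁻ x in Ioi (1:ℝ),
      ENNReal.ofReal (x ^ t) :=
    setLIntegral_mono (by fun_prop) fun x hx => ENNReal.ofReal_le_ofReal (h2 x hx)
  exact ENNReal.add_lt_top.mpr ⟨lt_of_le_of_lt b1 (fin_Ioc hs), lt_of_le_of_lt b2 (fin_Ioi ht)⟩

lemma finK {α : ℝ} (hα0 : 0 < α) (hα2 : α < 2) : Kf α 1 < ⊤ := by
  have heq : Kf α 1 = ∫⁻ x in Ioi (0:ℝ),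
      ENNReal.ofReal (x ^ (α-1) * min (1/x^2) 1) := by
    rw [Kf]
    refine setLIntegral_congr_fun measurableSet_Ioi (fun x hx => ?_)
    have hx : (0:ℝ) < x := hx
    rw [Rp_pos hx, Fm, ENNReal.ofReal_mul (Real.rpow_nonneg hx.le _)]
  rw [heq]
  refine fin_all (s := α-1) (t := α-3) (by linarith) (by linarith) ?_ ?_
  · intro x hx
    exact mul_le_of_le_one_right (Real.rpow_nonneg hx.1.le _) (min_le_right _ _)
  · intro x hx
    have hx1 : (1:ℝ) < x := hx
    have hx0 : (0:ℝ) < x := lt_trans one_pos hx1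
    have key : x ^ (α-1) * (1/x^2) = x ^ (α-3) := by
      rw [← Real.rpow_natCast x 2, mul_one_div, ← Real.rpow_sub hx0]
      norm_num
      rw [show α - 1 - 2 = α - 3 by ring]
    calc x ^ (α-1) * min (1/x^2) 1 ≤ x ^ (α-1) * (1/x^2) :=
          mul_le_mul_of_nonneg_left (min_le_left _ _) (Real.rpow_nonneg hx0.le _)
      _ = x ^ (α-3) := key

lemma finD {α : ℝ} (hα0 : 0 < α) (hα2 : α < 2) : Dv α < ⊤ := by
  have heq : Dv α = ∫⁻ x in Ioi (0:ℝ),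
      ENNReal.ofReal (min x 1 * x ^ (-α-1) * x ^ (α/2)) := by
    rw [Dv]
    refine setLIntegral_congr_fun measurableSet_Ioi (fun x hx => ?_)
    have hx : (0:ℝ) < x := hx
    have h0 : (0:ℝ) ≤ min x 1 := le_min hx.le zero_le_one
    rw [Rp_pos hx, Rp_pos hx, Fm, ENNReal.ofReal_mul (mul_nonneg h0 (Real.rpow_nonneg hx.le _)),
      ENNReal.ofReal_mul h0]
  rw [heq]
  refine fin_all (s := -α/2) (t := -α/2-1) (by linarith) (by linarith) ?_ ?_
  · intro x hx
    have hx0 : (0:ℝ) < x := hx.1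
    have : min x 1 = x := min_eq_left hx.2
    rw [this]
    have : x * x ^ (-α-1) * x ^ (α/2) = x ^ (-α/2) := by
      nth_rewrite 1 [← Real.rpow_one x]
      rw [← Real.rpow_add hx0, ← Real.rpow_add hx0]
      norm_num
      ring_nf
    rw [this]
  · intro x hx
    have hx1 : (1:ℝ) < x := hx
    have hx0 : (0:ℝ) < x := lt_trans one_pos hx1
    have : min x 1 = 1 := min_eq_right hx1.le
    rw [this, one_mul]
    have : x ^ (-α-1) * x ^ (α/2) = x ^ (-α/2-1) := by
      rw [← Real.rpow_add hx0]
      ring_nf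
    rw [this]

lemma LG (α : ℝ) (hK : Kf α 1 ≠ ⊤) {y : ℝ} (hy : 0 < y) :
    Gf α y = ENNReal.ofReal (y ^ (α/2)) * (Kf α 1 * Dv α) := by
  calc Gf α y
      = ∫⁻ u in Ioi (0:ℝ), ∫⁻ z in Ioi (0:ℝ),
          Rp (α-1) u * (Fm ((y/u^2)*z) * Fm z * Rp (-α-1) z) := by
        refine lintegral_congr fun u => ?_
        rw [Bf, ← lintegral_const_mul' _ _ Rp_ne_top]
    _ = ∫⁻ z in Ioi (0:ℝ), ∫⁻ u in Ioi (0:ℝ),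
          Rp (α-1) u * (Fm ((y/u^2)*z) * Fm z * Rp (-α-1) z) := by
        refine lintegral_lintegral_swap (Measurable.aemeasurable ?_)
        exact ((mRp _).comp measurable_fst).mul
          (((mFm.comp (((measurable_const.div (measurable_fst.pow_const 2))).mul
              measurable_snd)).mul (mFm.comp measurable_snd)).mul
            ((mRp _).comp measurable_snd))
    _ = ∫⁻ z in Ioi (0:ℝ), (ENNReal.ofReal (y^(α/2)) * Kf α 1) *
          (Fm z * Rp (-α-1) z * Rp (α/2) z) := by
        refine setLIntegral_congr_fun measurableSet_Ioi (fun z hz => ?_)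
        have hz : (0:ℝ) < z := hz
        calc ∫⁻ u in Ioi (0:ℝ), Rp (α-1) u * (Fm ((y/u^2)*z) * Fm z * Rp (-α-1) z)
            = ∫⁻ u in Ioi (0:ℝ), (Fm z * Rp (-α-1) z) * (Rp (α-1) u * Fm ((y*z)/u^2)) := by
              refine lintegral_congr fun u => ?_
              rw [div_mul_eq_mul_div]
              ring
          _ = (Fm z * Rp (-α-1) z) * Kf α (y*z) := by
              rw [Kf, ← lintegral_const_mul' _ _ (ENNReal.mul_ne_top Fm_ne_top Rp_ne_top)]
          _ = (Fm z * Rp (-α-1) z) * (ENNReal.ofReal ((y*z) ^ (α/2)) * Kf α 1) := by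
              rw [L3 α (mul_pos hy hz)]
          _ = (ENNReal.ofReal (y^(α/2)) * Kf α 1) * (Fm z * Rp (-α-1) z * Rp (α/2) z) := by
              rw [Real.mul_rpow hy.le hz.le,
                ENNReal.ofReal_mul (Real.rpow_nonneg hy.le _), Rp_pos (s := α/2) hz]
              ring
    _ = (ENNReal.ofReal (y^(α/2)) * Kf α 1) * Dv α := by
        rw [lintegral_const_mul' _ _ (ENNReal.mul_ne_top ENNReal.ofReal_ne_top hK), Dv]
    _ = ENNReal.ofReal (y^(α/2)) * (Kf α 1 * Dv α) := by ring

end Aux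

/-- For `1 < α < 2`, the integral
`∫∫∫ min(uv,1) min(vw,1) min(uw,1) u^{-α-1} v^{-α-1} w^{-α-1} du dv dw` over
`(0,∞)³` is finite. -/
theorem stmt3 (α : ℝ) (hα1 : 1 < α) (hα2 : α < 2) :
    (∫⁻ u in Set.Ioi (0 : ℝ), ∫⁻ v in Set.Ioi (0 : ℝ), ∫⁻ w in Set.Ioi (0 : ℝ),
      ENNReal.ofReal (min (u * v) 1 * min (v * w) 1 * min (u * w) 1 *
        u ^ (-α - 1) * v ^ (-α - 1) * w ^ (-α - 1))) < ⊤ := by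
  classical
  have hα0 : (0:ℝ) < α := by linarith
  have hK : Kf α 1 < ⊤ := finK hα0 hα2
  have hD : Dv α < ⊤ := finD hα0 hα2
  have step_u : ∀ u ∈ Set.Ioi (0:ℝ),
      (∫⁻ v in Set.Ioi (0:ℝ), ∫⁻ w in Set.Ioi (0:ℝ),
        ENNReal.ofReal (min (u * v) 1 * min (v * w) 1 * min (u * w) 1 *
          u ^ (-α - 1) * v ^ (-α - 1) * w ^ (-α - 1)))
        = Rp (α-1) u * Cf α u := by
    intro u hu0
    have hu : (0:ℝ) < u := hu0
    have step_v : ∀ v ∈ Set.Ioi (0:ℝ),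
        (∫⁻ w in Set.Ioi (0:ℝ),
          ENNReal.ofReal (min (u * v) 1 * min (v * w) 1 * min (u * w) 1 *
            u ^ (-α - 1) * v ^ (-α - 1) * w ^ (-α - 1)))
          = (Rp (-α-1) u * ENNReal.ofReal (u^α)) *
              (Fm (u*v) * Rp (-α-1) v * Bf α (v/u)) := by
      intro v hv0
      have hv : (0:ℝ) < v := hv0
      calc (∫⁻ w in Set.Ioi (0:ℝ),
            ENNReal.ofReal (min (u * v) 1 * min (v * w) 1 * min (u * w) 1 *
              u ^ (-α - 1) * v ^ (-α - 1) * w ^ (-α - 1)))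
          = ∫⁻ w in Set.Ioi (0:ℝ), (Fm (u*v) * Rp (-α-1) u * Rp (-α-1) v) *
              (Fm (v*w) * Fm (u*w) * Rp (-α-1) w) := by
            refine setLIntegral_congr_fun measurableSet_Ioi (fun w hw => ?_)
            have hw : (0:ℝ) < w := hw
            simp only [Fm]
            rw [Rp_pos hu, Rp_pos hv, Rp_pos hw,
              ofReal_prod6 (le_min (by positivity) zero_le_one)
                (Real.rpow_nonneg hu.le _) (Real.rpow_nonneg hv.le _)
                (le_min (by positivity) zero_le_one) (le_min (by positivity) zero_le_one)]
            congr 1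
            ring
        _ = (Fm (u*v) * Rp (-α-1) u * Rp (-α-1) v) *
              (ENNReal.ofReal (u^α) * Bf α (v/u)) := by
            rw [lintegral_const_mul' _ _
              (ENNReal.mul_ne_top (ENNReal.mul_ne_top Fm_ne_top Rp_ne_top) Rp_ne_top),
              L1 α v hu]
        _ = (Rp (-α-1) u * ENNReal.ofReal (u^α)) *
              (Fm (u*v) * Rp (-α-1) v * Bf α (v/u)) := by ring
    calc (∫⁻ v in Set.Ioi (0:ℝ), ∫⁻ w in Set.Ioi (0:ℝ),
          ENNReal.ofReal (min (u * v) 1 * min (v * w) 1 * min (u * w) 1 *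
            u ^ (-α - 1) * v ^ (-α - 1) * w ^ (-α - 1)))
        = ∫⁻ v in Set.Ioi (0:ℝ), (Rp (-α-1) u * ENNReal.ofReal (u^α)) *
            (Fm (u*v) * Rp (-α-1) v * Bf α (v/u)) :=
          setLIntegral_congr_fun measurableSet_Ioi step_v
      _ = (Rp (-α-1) u * ENNReal.ofReal (u^α)) * (ENNReal.ofReal (u^α) * Cf α u) := by
          rw [lintegral_const_mul' _ _ (ENNReal.mul_ne_top Rp_ne_top ENNReal.ofReal_ne_top),
            L2 α hu]
      _ = Rp (α-1) u * Cf α u := by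
          rw [Rp_pos (s := -α-1) hu, Rp_pos (s := α-1) hu,
            ← ENNReal.ofReal_mul (Real.rpow_nonneg hu.le _), ← Real.rpow_add hu,
            ← mul_assoc, ← ENNReal.ofReal_mul (Real.rpow_nonneg hu.le _),
            ← Real.rpow_add hu, show (-α-1+α+α) = α-1 by ring]
  calc (∫⁻ u in Set.Ioi (0:ℝ), ∫⁻ v in Set.Ioi (0:ℝ), ∫⁻ w in Set.Ioi (0:ℝ),
        ENNReal.ofReal (min (u * v) 1 * min (v * w) 1 * min (u * w) 1 *
          u ^ (-α - 1) * v ^ (-α - 1) * w ^ (-α - 1)))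
      = ∫⁻ u in Set.Ioi (0:ℝ), Rp (α-1) u * Cf α u :=
        setLIntegral_congr_fun measurableSet_Ioi step_u
    _ = ∫⁻ u in Set.Ioi (0:ℝ), ∫⁻ y in Set.Ioi (0:ℝ),
          Rp (α-1) u * (Fm y * Rp (-α-1) y * Bf α (y/u^2)) := by
        refine lintegral_congr fun u => ?_
        rw [Cf, ← lintegral_const_mul' _ _ Rp_ne_top]
    _ = ∫⁻ y in Set.Ioi (0:ℝ), ∫⁻ u in Set.Ioi (0:ℝ),
          Rp (α-1) u * (Fm y * Rp (-α-1) y * Bf α (y/u^2)) := by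
        refine lintegral_lintegral_swap (Measurable.aemeasurable ?_)
        exact ((mRp _).comp measurable_fst).mul
          (((mFm.comp measurable_snd).mul ((mRp _).comp measurable_snd)).mul
            ((mBf α).comp (measurable_snd.div (measurable_fst.pow_const 2))))
    _ = ∫⁻ y in Set.Ioi (0:ℝ), (Kf α 1 * Dv α) *
          (Fm y * Rp (-α-1) y * Rp (α/2) y) := by
        refine setLIntegral_congr_fun measurableSet_Ioi (fun y hy0 => ?_)
        have hy : (0:ℝ) < y := hy0
        calc ∫⁻ u in Set.Ioi (0:ℝ), Rp (α-1) u * (Fm y * Rp (-α-1) y * Bf α (y/u^2))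
            = ∫⁻ u in Set.Ioi (0:ℝ), (Fm y * Rp (-α-1) y) *
                (Rp (α-1) u * Bf α (y/u^2)) := lintegral_congr fun u => by ring
          _ = (Fm y * Rp (-α-1) y) * Gf α y := by
              rw [Gf, ← lintegral_const_mul' _ _ (ENNReal.mul_ne_top Fm_ne_top Rp_ne_top)]
          _ = (Fm y * Rp (-α-1) y) *
                (ENNReal.ofReal (y^(α/2)) * (Kf α 1 * Dv α)) := by
              rw [LG α hK.ne hy]
          _ = (Kf α 1 * Dv α) * (Fm y * Rp (-α-1) y * Rp (α/2) y) := by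
              rw [Rp_pos (s := α/2) hy]
              ring
    _ = (Kf α 1 * Dv α) * Dv α := by
        rw [lintegral_const_mul' _ _ (ENNReal.mul_ne_top hK.ne hD.ne), Dv]
  exact ENNReal.mul_lt_top (ENNReal.mul_lt_top hK hD) hD
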